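/- arXiv:1203.2371 — 3 statements merged into one kernel-verified Lean document; each statement's English description precedes it below -/
import Mathlib

section
/- In su(3) (trace-free skew-Hermitian 3×3 complex matrices), let E₁₂, E₂₃, E₁₃ be the real elementary skew-symmetric matrices and let iF₁₂, iF₂₃, iF₁₃ be i times the symmetric matrices with 1 in entries (i,j) and (j,i). Set X = E₂₃ + (E₁₂ + E₁₃) and Y = iF₂₃ + i(F₁₂ − F₁₃). Then [X, Y] = 0, while [E₂₃, iF₂₃] = 2i(F₂₂ − F₃₃) ≠ 0, where Fₖₖ is the matrix with 1 in entry (k,k) and zeros elsewhere. -/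
open Complex in
/-- Elementary skew-symmetric 3×3 complex matrix. -/
def Esu3 (i j : Fin 3) : Matrix (Fin 3) (Fin 3) ℂ :=
  Matrix.single i j 1 - Matrix.single j i 1

/-- The symmetric matrix with 1 in entries (i,j) and (j,i). -/
def Fsu3 (i j : Fin 3) : Matrix (Fin 3) (Fin 3) ℂ :=
  Matrix.single i j 1 + Matrix.single j i 1

/-- In `su(3)`: with `X = E₂₃ + (E₁₂ + E₁₃)` and `Y = iF₂₃ + i(F₁₂ − F₁₃)`,
one has `[X,Y] = 0`, while `[E₂₃, iF₂₃] = 2i(F₂₂ − F₃₃) ≠ 0`. (0-based indices.) -/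
theorem stmt3 :
    ⁅Esu3 1 2 + (Esu3 0 1 + Esu3 0 2),
      Complex.I • Fsu3 1 2 + Complex.I • (Fsu3 0 1 - Fsu3 0 2)⁆ = 0 ∧
    ⁅Esu3 1 2, Complex.I • Fsu3 1 2⁆
      = (2 * Complex.I) • (Matrix.single (1 : Fin 3) 1 (1:ℂ)
          - Matrix.single (2 : Fin 3) 2 (1:ℂ)) ∧
    (2 * Complex.I) • (Matrix.single (1 : Fin 3) 1 (1:ℂ)
          - Matrix.single (2 : Fin 3) 2 (1:ℂ)) ≠ 0 := by
  refine ⟨?_, ?_, ?_⟩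
  · ext i j
    fin_cases i <;> fin_cases j <;>
      simp [Esu3, Fsu3, Ring.lie_def, Matrix.mul_apply, Fin.sum_univ_three,
        Matrix.single]
  · ext i j
    fin_cases i <;> fin_cases j <;>
      simp [Esu3, Fsu3, Ring.lie_def, Matrix.mul_apply, Fin.sum_univ_three,
        Matrix.single] <;> ring
  · intro h
    have := congrFun (congrFun h 1) 1
    simp [Matrix.single, Complex.ext_iff] at this
end

section
/- In sp(2), realized as 2×2 quaternionic matrices X with X* = −X (or equivalently using the Hermitian convention of the paper), the matrices X = [[j, j+1],[j−1, i−k]] and Y = [[−i−k, i],[i, i/2 + j − k/2]] satisfy [X, Y] = 0, while the off-diagonal parts X^m = [[0, j+1],[j−1, 0]] and Y^m = [[0, i],[i, 0]] satisfy [X^m, Y^m] ≠ 0. -/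
set_option maxHeartbeats 2000000

open Quaternion

/-- The quaternion unit i. -/
def qi : ℍ[ℝ] := ⟨0, 1, 0, 0⟩
/-- The quaternion unit j. -/
def qj : ℍ[ℝ] := ⟨0, 0, 1, 0⟩
/-- The quaternion unit k. -/
def qk : ℍ[ℝ] := ⟨0, 0, 0, 1⟩

@[simp] lemma qi_c : qi.re = 0 ∧ qi.imI = 1 ∧ qi.imJ = 0 ∧ qi.imK = 0 := ⟨rfl, rfl, rfl, rfl⟩
@[simp] lemma qj_c : qj.re = 0 ∧ qj.imI = 0 ∧ qj.imJ = 1 ∧ qj.imK = 0 := ⟨rfl, rfl, rfl, rfl⟩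
@[simp] lemma qk_c : qk.re = 0 ∧ qk.imI = 0 ∧ qk.imJ = 0 ∧ qk.imK = 1 := ⟨rfl, rfl, rfl, rfl⟩

lemma two_comp : ((2:ℍ[ℝ]).re = 2) ∧ ((2:ℍ[ℝ]).imI = 0) ∧ ((2:ℍ[ℝ]).imJ = 0) ∧ ((2:ℍ[ℝ]).imK = 0) :=
  ⟨rfl, rfl, rfl, rfl⟩

lemma qtwo_ne_zero : (2:ℍ[ℝ]) ≠ 0 := by
  intro h
  have := congrArg QuaternionAlgebra.re h
  rw [two_comp.1] at this
  norm_num at this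

lemma qi2 : qi / 2 = ((1/2:ℝ) • qi : ℍ[ℝ]) := by
  rw [div_eq_iff qtwo_ne_zero]
  ext <;> simp [Quaternion.re_mul, Quaternion.imI_mul, Quaternion.imJ_mul, Quaternion.imK_mul,
    two_comp.1, two_comp.2.1, two_comp.2.2.1, two_comp.2.2.2] <;> norm_num

lemma qk2 : qk / 2 = ((1/2:ℝ) • qk : ℍ[ℝ]) := by
  rw [div_eq_iff qtwo_ne_zero]
  ext <;> simp [Quaternion.re_mul, Quaternion.imI_mul, Quaternion.imJ_mul, Quaternion.imK_mul,
    two_comp.1, two_comp.2.1, two_comp.2.2.1, two_comp.2.2.2] <;> norm_num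

/-- In `sp(2)` (2×2 quaternionic matrices) the matrices
`X = [[j, j+1],[j−1, i−k]]` and `Y = [[−i−k, i],[i, i/2 + j − k/2]]` commute, while
their off-diagonal parts `X^m = [[0, j+1],[j−1, 0]]` and `Y^m = [[0,i],[i,0]]`
have nonvanishing commutator. -/
theorem stmt6 :
    ⁅(!![qj, qj + 1; qj - 1, qi - qk] : Matrix (Fin 2) (Fin 2) ℍ[ℝ]),
      (!![-qi - qk, qi; qi, qi / 2 + qj - qk / 2] : Matrix (Fin 2) (Fin 2) ℍ[ℝ])⁆ = 0 ∧
    ⁅(!![0, qj + 1; qj - 1, 0] : Matrix (Fin 2) (Fin 2) ℍ[ℝ]),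
      (!![0, qi; qi, 0] : Matrix (Fin 2) (Fin 2) ℍ[ℝ])⁆ ≠ 0 := by
  rw [qi2, qk2]
  constructor
  · show _ * _ - _ * _ = 0
    refine Matrix.ext fun i j => ?_
    fin_cases i <;> fin_cases j <;>
      simp [Matrix.mul_apply, Fin.sum_univ_two, Quaternion.ext_iff, Quaternion.re_mul, Quaternion.imI_mul, Quaternion.imJ_mul, Quaternion.imK_mul] <;>
      norm_num
  · intro h
    have := congrFun (congrFun (show _ * _ - _ * _ = (0:Matrix (Fin 2) (Fin 2) ℍ[ℝ]) from h) 0) 0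
    simp [Matrix.mul_apply, Fin.sum_univ_two, Quaternion.ext_iff, Quaternion.re_mul, Quaternion.imI_mul, Quaternion.imJ_mul, Quaternion.imK_mul] at this
end

section
/- Let g = g₀ ⊕ g₁ ⊕ ⋯ ⊕ gₙ be an orthogonal decomposition of a compact Lie algebra into ideals (g₀ abelian, gᵢ simple), and let h ⊂ k ⊂ g be subalgebras with h = ⊕ᵢ(h ∩ gᵢ) ⊕ (central part) and k = ⊕ᵢ(k ∩ gᵢ) ⊕ (central part) (as for full-rank/regular subalgebras). If for each i = 1,…,n there exists Cᵢ > 0 with |[X^{mᵢ},Y^{mᵢ}]^{mᵢ}| ≤ Cᵢ|[X,Y]| for all X, Y in the orthogonal complement pᵢ of h ∩ gᵢ in gᵢ, then with C = max(C₁,…,Cₙ), for all X, Y in the orthogonal complement p of h in g: |[X^m, Y^m]^m| ≤ C|[X,Y]|, where m is the orthogonal complement of h in k. -/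
open RealInnerProductSpace

attribute [local instance 0] LieRing.toAddCommGroup

private lemma stmt16aux1 {g : Type*} [LieRing g] (x y : g) :
    ⁅x, ⁅y, x⁆⁆ = ⁅⁅x, y⁆, x⁆ := by
  rw [leibniz_lie x y x, lie_self, lie_zero, add_zero]

private lemma stmt16aux2 {g : Type*} [LieRing g] (x y : g) :
    ⁅⁅x, y⁆, y⁆ = ⁅y, ⁅y, x⁆⁆ := by
  have h0 := leibniz_lie x y y
  rw [lie_self, lie_zero] at h0
  have h1 : ⁅⁅x, y⁆, y⁆ = -⁅y, ⁅x, y⁆⁆ := eq_neg_of_add_eq_zero_left h0.symm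
  rw [h1, ← lie_neg, lie_skew]

private lemma stmt16aux3 {g : Type*} [LieRing g] (x y : g) :
    ⁅x, x⁆ = ⁅y, y⁆ := by
  rw [lie_self, lie_self]

/-- Let `g = z ⊕ g₁ ⊕ ⋯ ⊕ gₙ` be an orthogonal decomposition of a compact Lie
algebra into ideals (`z` abelian, each `gᵢ` simple), and let `h ⊆ k ⊆ g` be
subalgebras which decompose along the ideals.  If for each `i` there is
`Cᵢ > 0` with `|[X^{mᵢ},Y^{mᵢ}]^{mᵢ}| ≤ Cᵢ |[X,Y]|` for all `X, Y ∈ pᵢ`, then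
with `C = max(C₁,…,Cₙ)` one has `|[X^m,Y^m]^m| ≤ C |[X,Y]|` for all `X, Y ∈ p`. -/
theorem stmt16 {g : Type*} [LieRing g] [NormedAddCommGroup g]
    [InnerProductSpace ℝ g] [FiniteDimensional ℝ g]
    (hbil : ∀ (c : ℝ) (x y : g), ⁅c • x, y⁆ = c • ⁅x, y⁆)
    (hinv : ∀ x y z : g, ⟪⁅x, y⁆, z⟫ = -⟪y, ⁅x, z⁆⟫)
    (n : ℕ) (hn : 0 < n)
    (z : Submodule ℝ g) (G : Fin n → Submodule ℝ g)
    -- `z` and the `G i` are ideals of `g`: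
    (hzideal : ∀ x : g, ∀ y ∈ z, ⁅x, y⁆ ∈ z)
    (hGideal : ∀ i, ∀ x : g, ∀ y ∈ G i, ⁅x, y⁆ ∈ G i)
    -- `z` is abelian:
    (hzab : ∀ x ∈ z, ∀ y ∈ z, ⁅x, y⁆ = 0)
    -- each `G i` is simple (noncommutative and without proper nonzero ideals):
    (hGsimple : ∀ i, (¬ ∀ x ∈ G i, ∀ y ∈ G i, ⁅x, y⁆ = 0) ∧
      ∀ I : Submodule ℝ g, I ≤ G i → (∀ x : g, ∀ y ∈ I, ⁅x, y⁆ ∈ I) →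
        I = ⊥ ∨ I = G i)
    -- the decomposition is orthogonal and exhausts `g`:
    (horthz : ∀ i, ∀ x ∈ z, ∀ y ∈ G i, ⟪x, y⟫ = 0)
    (horthG : ∀ i j, i ≠ j → ∀ x ∈ G i, ∀ y ∈ G j, ⟪x, y⟫ = 0)
    (hspan : z ⊔ (⨆ i, G i) = ⊤)
    -- the subalgebras `h ⊆ k`:
    (h k : Submodule ℝ g)
    (hh : ∀ x ∈ h, ∀ y ∈ h, ⁅x, y⁆ ∈ h)
    (hk : ∀ x ∈ k, ∀ y ∈ k, ⁅x, y⁆ ∈ k)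
    (hhk : h ≤ k)
    -- `h` and `k` decompose along the ideals:
    (hsplith : h = (h ⊓ z) ⊔ ⨆ i, (h ⊓ G i))
    (hsplitk : k = (k ⊓ z) ⊔ ⨆ i, (k ⊓ G i))
    -- condition on each simple ideal, with constants `Cᵢ > 0`:
    (C : Fin n → ℝ) (hC : ∀ i, 0 < C i)
    (hCi : ∀ i, ∀ X ∈ (h ⊓ G i)ᗮ ⊓ G i, ∀ Y ∈ (h ⊓ G i)ᗮ ⊓ G i,
      ‖(Submodule.orthogonalProjectionOnto ((h ⊓ G i)ᗮ ⊓ k ⊓ G i)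
          ⁅(Submodule.orthogonalProjectionOnto ((h ⊓ G i)ᗮ ⊓ k ⊓ G i) X : g),
            (Submodule.orthogonalProjectionOnto ((h ⊓ G i)ᗮ ⊓ k ⊓ G i) Y : g)⁆ : g)‖
        ≤ C i * ‖⁅X, Y⁆‖) :
    ∀ X ∈ hᗮ, ∀ Y ∈ hᗮ,
      ‖(Submodule.orthogonalProjectionOnto (hᗮ ⊓ k)
          ⁅(Submodule.orthogonalProjectionOnto (hᗮ ⊓ k) X : g),
            (Submodule.orthogonalProjectionOnto (hᗮ ⊓ k) Y : g)⁆ : g)‖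
        ≤ (Finset.univ.sup' (Finset.univ_nonempty_iff.mpr ⟨⟨0, hn⟩⟩) C) * ‖⁅X, Y⁆‖ := by
  classical
  -- ℝ-linearity of the bracket in the second slot, w.r.t. the normed structure
  have lie_add₂ : ∀ x a b : g, ⁅x, a + b⁆ = ⁅x, a⁆ + ⁅x, b⁆ := by
    intro x a b
    apply ext_inner_right ℝ
    intro w
    rw [hinv, inner_add_left, inner_add_left, hinv x a w, hinv x b w]
    ring
  have lie_smul₂ : ∀ (c : ℝ) (x y : g), ⁅x, c • y⁆ = c • ⁅x, y⁆ := by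
    intro c x y
    apply ext_inner_right ℝ
    intro w
    rw [hinv, real_inner_smul_left, real_inner_smul_left, hinv]
    ring
  have zero_lie₂ : ∀ y : g, ⁅(0 : g), y⁆ = 0 := by
    intro y
    calc ⁅(0 : g), y⁆ = ⁅(0 : ℝ) • y, y⁆ := by rw [zero_smul]
      _ = (0 : ℝ) • ⁅y, y⁆ := hbil 0 y y
      _ = 0 := zero_smul _ _
  have lie_zero₂ : ∀ x : g, ⁅x, (0 : g)⁆ = 0 := by
    intro x
    calc ⁅x, (0 : g)⁆ = ⁅x, (0 : ℝ) • (0 : g)⁆ := by rw [zero_smul]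
      _ = (0 : ℝ) • ⁅x, (0 : g)⁆ := lie_smul₂ 0 x 0
      _ = 0 := zero_smul _ _
  have lieid1 : ∀ x y : g, ⁅x, ⁅y, x⁆⁆ = ⁅⁅x, y⁆, x⁆ := fun x y => stmt16aux1 x y
  have lieid2 : ∀ x y : g, ⁅⁅x, y⁆, y⁆ = ⁅y, ⁅y, x⁆⁆ := fun x y => stmt16aux2 x y
  have lie_self₂ : ∀ x : g, ⁅x, x⁆ = (0 : g) := by
    intro x
    have h1 : ⁅(2 : ℝ) • x, (2 : ℝ) • x⁆ = (4 : ℝ) • ⁅x, x⁆ := by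
      rw [hbil, lie_smul₂, smul_smul]; norm_num
    have h2 : ⁅(2 : ℝ) • x, (2 : ℝ) • x⁆ = ⁅x, x⁆ := stmt16aux3 _ _
    have h3 : ((4 : ℝ) - 1) • ⁅x, x⁆ = 0 := by
      rw [sub_smul, one_smul, ← h1, h2, sub_self]
    rcases smul_eq_zero.mp h3 with h5 | h5
    · norm_num at h5
    · exact h5
  -- skew-symmetry w.r.t. the normed additive structure
  have inner_brk : ∀ x y : g, ⟪⁅x, y⁆, ⁅y, x⁆⟫ = -‖⁅y, x⁆‖ ^ 2 := by
    intro x y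
    rw [hinv x y ⁅y, x⁆, lieid1 x y, real_inner_comm ⁅⁅x, y⁆, x⁆ y, hinv ⁅x, y⁆ x y,
      lieid2 x y, real_inner_comm ⁅y, ⁅y, x⁆⁆ x, hinv y ⁅y, x⁆ x,
      real_inner_self_eq_norm_sq]
    ring
  have skew : ∀ x y : g, ⁅y, x⁆ = -⁅x, y⁆ := by
    intro x y
    have h1 := inner_brk x y
    have h2 := inner_brk y x
    have h4 : ‖⁅x, y⁆‖ ^ 2 = ‖⁅y, x⁆‖ ^ 2 := by
      have h3 := real_inner_comm ⁅x, y⁆ ⁅y, x⁆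
      rw [h1, h2] at h3
      linarith
    have h5 : ‖⁅x, y⁆ + ⁅y, x⁆‖ ^ 2 = 0 := by
      rw [norm_add_sq_real, h1]
      linarith
    have h6 : ⁅x, y⁆ + ⁅y, x⁆ = 0 :=
      norm_eq_zero.mp (pow_eq_zero_iff two_ne_zero |>.mp h5)
    exact eq_neg_of_add_eq_zero_right h6
  have add_lie₂ : ∀ a b y : g, ⁅a + b, y⁆ = ⁅a, y⁆ + ⁅b, y⁆ := by
    intro a b y
    rw [skew y (a + b), lie_add₂, neg_add, ← skew, ← skew]
  -- brackets between distinct ideals vanish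
  have hGG0 : ∀ i j, i ≠ j → ∀ x ∈ G i, ∀ y ∈ G j, ⁅x, y⁆ = 0 := by
    intro i j hij x hx y hy
    have h1 : ⁅x, y⁆ ∈ G j := hGideal j x y hy
    have h2 : ⁅x, y⁆ ∈ G i := by
      rw [skew y x]; exact (G i).neg_mem (hGideal i y x hx)
    exact inner_self_eq_zero.mp (horthG i j hij _ h2 _ h1)
  have hzG0 : ∀ i, ∀ x ∈ z, ∀ y ∈ G i, ⁅x, y⁆ = 0 := by
    intro i x hx y hy
    have h1 : ⁅x, y⁆ ∈ G i := hGideal i x y hy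
    have h2 : ⁅x, y⁆ ∈ z := by
      rw [skew y x]; exact z.neg_mem (hzideal y x hx)
    exact inner_self_eq_zero.mp (horthz i _ h2 _ h1)
  -- sums and brackets
  have sum_lie' : ∀ (s : Finset (Fin n)) (f : Fin n → g) (y : g),
      ⁅(∑ i ∈ s, f i), y⁆ = ∑ i ∈ s, ⁅f i, y⁆ := by
    intro s f y
    induction s using Finset.induction_on with
    | empty => rw [Finset.sum_empty, Finset.sum_empty, zero_lie₂]
    | insert _ _ hns ih => rw [Finset.sum_insert hns, Finset.sum_insert hns, add_lie₂, ih]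
  have lie_sum' : ∀ (s : Finset (Fin n)) (x : g) (f : Fin n → g),
      ⁅x, (∑ i ∈ s, f i)⁆ = ∑ i ∈ s, ⁅x, f i⁆ := by
    intro s x f
    induction s using Finset.induction_on with
    | empty => rw [Finset.sum_empty, Finset.sum_empty, lie_zero₂]
    | insert _ _ hns ih => rw [Finset.sum_insert hns, Finset.sum_insert hns, lie_add₂, ih]
  -- projection onto G i picks out the i-th component of any decomposition
  have projG : ∀ (i : Fin n) (x a : g) (f : Fin n → g), a ∈ z → (∀ j, f j ∈ G j) →
      x = a + ∑ j, f j → ((Submodule.orthogonalProjectionOnto (G i) x : G i) : g) = f i := by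
    intro i x a f ha hf hx
    apply Submodule.eq_starProjection_of_mem_of_inner_eq_zero (hf i)
    intro w hw
    have hsum : ∑ j, ⟪f j, w⟫ = ⟪f i, w⟫ := by
      apply Finset.sum_eq_single_of_mem i (Finset.mem_univ i)
      intro j _ hji
      exact horthG j i hji _ (hf j) _ hw
    rw [hx, inner_sub_left, inner_add_left, sum_inner, hsum, horthz i a ha w hw]
    ring
  -- decomposition of elements of split submodules
  have split : ∀ (p : Submodule ℝ g), p = (p ⊓ z) ⊔ (⨆ i, p ⊓ G i) → ∀ x ∈ p,
      (∀ i, ((Submodule.orthogonalProjectionOnto (G i) x : G i) : g) ∈ p ⊓ G i) ∧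
        x - ∑ i, ((Submodule.orthogonalProjectionOnto (G i) x : G i) : g) ∈ p ⊓ z := by
    intro p hp x hx
    have hx' : x ∈ (p ⊓ z) ⊔ (⨆ i, p ⊓ G i) := hp.le hx
    obtain ⟨a, ha, b, hb, hab⟩ := Submodule.mem_sup.mp hx'
    rw [Submodule.mem_iSup_iff_exists_finsupp] at hb
    obtain ⟨f, hf, hfs⟩ := hb
    have hsum : (f.sum fun _ xi => xi) = ∑ j, f j := Finsupp.sum_fintype _ _ (fun _ => rfl)
    have hxdec : x = a + ∑ j, f j := by rw [← hab, ← hfs, hsum]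
    have hfG : ∀ j, f j ∈ G j := fun j => (hf j).2
    have hPeq : ∀ i, ((Submodule.orthogonalProjectionOnto (G i) x : G i) : g) = f i :=
      fun i => projG i x a f ha.2 hfG hxdec
    refine ⟨fun i => by rw [hPeq i]; exact hf i, ?_⟩
    have he : x - ∑ i, ((Submodule.orthogonalProjectionOnto (G i) x : G i) : g) = a := by
      rw [Finset.sum_congr rfl (fun i _ => hPeq i), hxdec]
      abel
    rw [he]; exact ha
  have htop : (⊤ : Submodule ℝ g) = (⊤ ⊓ z) ⊔ (⨆ i, ⊤ ⊓ G i) := by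
    simpa using hspan.symm
  have hcent : ∀ x : g, x - ∑ i, ((Submodule.orthogonalProjectionOnto (G i) x : G i) : g) ∈ z :=
    fun x => ((split ⊤ htop x trivial).2).2
  -- the bracket decomposes along the ideals
  have brkt : ∀ x y : g, ⁅x, y⁆ =
      ∑ i, ⁅((Submodule.orthogonalProjectionOnto (G i) x : G i) : g),
            ((Submodule.orthogonalProjectionOnto (G i) y : G i) : g)⁆ := by
    intro x y
    set a := x - ∑ i, ((Submodule.orthogonalProjectionOnto (G i) x : G i) : g) with hadef
    set b := y - ∑ i, ((Submodule.orthogonalProjectionOnto (G i) y : G i) : g) with hbdef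
    have ha : a ∈ z := hcent x
    have hb : b ∈ z := hcent y
    have hxe : x = a + ∑ i, ((Submodule.orthogonalProjectionOnto (G i) x : G i) : g) := by
      rw [hadef]; abel
    have hye : y = b + ∑ i, ((Submodule.orthogonalProjectionOnto (G i) y : G i) : g) := by
      rw [hbdef]; abel
    calc ⁅x, y⁆ = ⁅a + ∑ i, ((Submodule.orthogonalProjectionOnto (G i) x : G i) : g),
          b + ∑ i, ((Submodule.orthogonalProjectionOnto (G i) y : G i) : g)⁆ := by rw [← hxe, ← hye]
      _ = (⁅a, b⁆ + ∑ i, ⁅((Submodule.orthogonalProjectionOnto (G i) x : G i) : g), b⁆)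
            + (∑ i, ⁅a, ((Submodule.orthogonalProjectionOnto (G i) y : G i) : g)⁆
              + ∑ i, ⁅((Submodule.orthogonalProjectionOnto (G i) x : G i) : g),
                  ∑ j, ((Submodule.orthogonalProjectionOnto (G j) y : G j) : g)⁆) := by
          rw [lie_add₂, add_lie₂, add_lie₂, sum_lie', lie_sum', sum_lie']
      _ = ∑ i, ⁅((Submodule.orthogonalProjectionOnto (G i) x : G i) : g),
            ((Submodule.orthogonalProjectionOnto (G i) y : G i) : g)⁆ := by
          rw [hzab a ha b hb]
          rw [Finset.sum_congr rfl (fun i (_ : i ∈ Finset.univ) => by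
            rw [skew b (((Submodule.orthogonalProjectionOnto (G i) x : G i) : g)),
              hzG0 i b hb _ (SetLike.coe_mem _), neg_zero])]
          rw [Finset.sum_congr rfl
            (fun i (_ : i ∈ Finset.univ) => hzG0 i a ha _ (SetLike.coe_mem _))]
          have hlast : ∀ i : Fin n, ⁅((Submodule.orthogonalProjectionOnto (G i) x : G i) : g),
              ∑ j, ((Submodule.orthogonalProjectionOnto (G j) y : G j) : g)⁆
              = ⁅((Submodule.orthogonalProjectionOnto (G i) x : G i) : g),
                  ((Submodule.orthogonalProjectionOnto (G i) y : G i) : g)⁆ := by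
            intro i
            rw [lie_sum']
            apply Finset.sum_eq_single_of_mem i (Finset.mem_univ i)
            intro j _ hji
            exact hGG0 i j (fun e => hji e.symm) _ (SetLike.coe_mem _) _ (SetLike.coe_mem _)
          rw [Finset.sum_congr rfl (fun i _ => hlast i)]
          simp
  -- inner products against G i factor through the projection
  have innerP : ∀ (i : Fin n) (x w : g), w ∈ G i →
      ⟪x, w⟫ = ⟪((Submodule.orthogonalProjectionOnto (G i) x : G i) : g), w⟫ := by
    intro i x w hw
    have h0 := (Submodule.mem_orthogonal' _ _).1
      (Submodule.sub_starProjection_mem_orthogonal (K := G i) x) w hw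
    rw [Submodule.starProjection_apply, inner_sub_left, sub_eq_zero] at h0
    exact h0
  -- norms of sums of components
  have normsum : ∀ f : Fin n → g, (∀ i, f i ∈ G i) → ‖∑ i, f i‖ ^ 2 = ∑ i, ‖f i‖ ^ 2 := by
    intro f hf
    rw [← real_inner_self_eq_norm_sq, sum_inner]
    apply Finset.sum_congr rfl
    intro i _
    rw [inner_sum, ← real_inner_self_eq_norm_sq]
    apply Finset.sum_eq_single_of_mem i (Finset.mem_univ i)
    intro j _ hji
    exact horthG i j (fun e => hji e.symm) _ (hf i) _ (hf j)
  -- membership lemmas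
  have hksplit := split k hsplitk
  have hhsplit := split h hsplith
  have PmemPerp : ∀ x : g, x ∈ hᗮ → ∀ i,
      ((Submodule.orthogonalProjectionOnto (G i) x : G i) : g) ∈ (h ⊓ G i)ᗮ := by
    intro x hx i
    rw [Submodule.mem_orthogonal']
    intro w hw
    rw [← innerP i x w hw.2]
    exact (Submodule.mem_orthogonal' _ _).1 hx w hw.1
  have memHperp : ∀ (i : Fin n) (v : g), v ∈ G i → v ∈ (h ⊓ G i)ᗮ → v ∈ hᗮ := by
    intro i v hvG hvp
    rw [Submodule.mem_orthogonal']
    intro w hw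
    have h1 : ⟪v, w⟫ = ⟪v, ((Submodule.orthogonalProjectionOnto (G i) w : G i) : g)⟫ := by
      rw [real_inner_comm, innerP i w v hvG, real_inner_comm]
    rw [h1]
    exact (Submodule.mem_orthogonal' _ _).1 hvp _ ((hhsplit w hw).1 i)
  have MleM : ∀ i, (h ⊓ G i)ᗮ ⊓ k ⊓ G i ≤ hᗮ ⊓ k := by
    intro i v hv
    exact ⟨memHperp i v hv.2 hv.1.1, hv.1.2⟩
  have MleG : ∀ i, (h ⊓ G i)ᗮ ⊓ k ⊓ G i ≤ G i := fun i v hv => hv.2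
  have PmemM : ∀ x : g, x ∈ hᗮ ⊓ k → ∀ i,
      ((Submodule.orthogonalProjectionOnto (G i) x : G i) : g) ∈ (h ⊓ G i)ᗮ ⊓ k ⊓ G i := by
    intro x hx i
    exact ⟨⟨PmemPerp x hx.1 i, ((hksplit x hx.2).1 i).1⟩, SetLike.coe_mem _⟩
  -- projections commute with component projections
  have projcomm : ∀ (i : Fin n) (x : g),
      ((Submodule.orthogonalProjectionOnto (G i)
          ((Submodule.orthogonalProjectionOnto (hᗮ ⊓ k) x : (hᗮ ⊓ k : Submodule ℝ g)) : g) : G i) : g)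
        = ((Submodule.orthogonalProjectionOnto ((h ⊓ G i)ᗮ ⊓ k ⊓ G i)
            ((Submodule.orthogonalProjectionOnto (G i) x : G i) : g)
              : ((h ⊓ G i)ᗮ ⊓ k ⊓ G i : Submodule ℝ g)) : g) := by
    intro i x
    symm
    apply Submodule.eq_starProjection_of_mem_of_inner_eq_zero
      (PmemM _ (SetLike.coe_mem (Submodule.orthogonalProjectionOnto (hᗮ ⊓ k) x)) i)
    intro w hw
    have hwG : w ∈ G i := hw.2
    rw [inner_sub_left, ← innerP i x w hwG, ← innerP i _ w hwG]
    have h0 := (Submodule.mem_orthogonal' _ _).1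
      (Submodule.sub_starProjection_mem_orthogonal (K := hᗮ ⊓ k) x) w (MleM i hw)
    rw [Submodule.starProjection_apply, inner_sub_left] at h0
    linarith
  have projmG : ∀ (i : Fin n) (v : g), v ∈ G i →
      ((Submodule.orthogonalProjectionOnto (hᗮ ⊓ k) v : (hᗮ ⊓ k : Submodule ℝ g)) : g)
        = ((Submodule.orthogonalProjectionOnto ((h ⊓ G i)ᗮ ⊓ k ⊓ G i) v
            : ((h ⊓ G i)ᗮ ⊓ k ⊓ G i : Submodule ℝ g)) : g) := by
    intro i v hv
    apply Submodule.eq_starProjection_of_mem_of_inner_eq_zero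
      (MleM i (SetLike.coe_mem (Submodule.orthogonalProjectionOnto ((h ⊓ G i)ᗮ ⊓ k ⊓ G i) v)))
    intro u hu
    have hd : v - ((Submodule.orthogonalProjectionOnto ((h ⊓ G i)ᗮ ⊓ k ⊓ G i) v
        : ((h ⊓ G i)ᗮ ⊓ k ⊓ G i : Submodule ℝ g)) : g) ∈ G i :=
      (G i).sub_mem hv (MleG i (SetLike.coe_mem _))
    have h1 : ⟪v - ((Submodule.orthogonalProjectionOnto ((h ⊓ G i)ᗮ ⊓ k ⊓ G i) v
        : ((h ⊓ G i)ᗮ ⊓ k ⊓ G i : Submodule ℝ g)) : g), u⟫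
        = ⟪v - ((Submodule.orthogonalProjectionOnto ((h ⊓ G i)ᗮ ⊓ k ⊓ G i) v
        : ((h ⊓ G i)ᗮ ⊓ k ⊓ G i : Submodule ℝ g)) : g),
          ((Submodule.orthogonalProjectionOnto (G i) u : G i) : g)⟫ := by
      rw [real_inner_comm, innerP i u _ hd, real_inner_comm]
    rw [h1]
    exact (Submodule.mem_orthogonal' _ _).1
      (Submodule.sub_starProjection_mem_orthogonal (K := (h ⊓ G i)ᗮ ⊓ k ⊓ G i) v) _ (PmemM u hu i)
  -- main argument
  intro X hX Y hY
  set Q : g → g := fun x => ((Submodule.orthogonalProjectionOnto (hᗮ ⊓ k) x : (hᗮ ⊓ k : Submodule ℝ g)) : g)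
    with hQdef
  set β : Fin n → g := fun i =>
    ⁅((Submodule.orthogonalProjectionOnto ((h ⊓ G i)ᗮ ⊓ k ⊓ G i)
        ((Submodule.orthogonalProjectionOnto (G i) X : G i) : g)
          : ((h ⊓ G i)ᗮ ⊓ k ⊓ G i : Submodule ℝ g)) : g),
     ((Submodule.orthogonalProjectionOnto ((h ⊓ G i)ᗮ ⊓ k ⊓ G i)
        ((Submodule.orthogonalProjectionOnto (G i) Y : G i) : g)
          : ((h ⊓ G i)ᗮ ⊓ k ⊓ G i : Submodule ℝ g)) : g)⁆
    with hβdef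
  have hβG : ∀ i, β i ∈ G i := by
    intro i
    exact hGideal i _ _ (MleG i (SetLike.coe_mem _))
  have e1 : ⁅Q X, Q Y⁆ = ∑ i, β i := by
    rw [brkt (Q X) (Q Y)]
    exact Finset.sum_congr rfl (fun i _ => by
      rw [hβdef]
      rw [show Q X = ((Submodule.orthogonalProjectionOnto (hᗮ ⊓ k) X : (hᗮ ⊓ k : Submodule ℝ g)) : g) from rfl,
        show Q Y = ((Submodule.orthogonalProjectionOnto (hᗮ ⊓ k) Y : (hᗮ ⊓ k : Submodule ℝ g)) : g) from rfl,
        projcomm i X, projcomm i Y])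
  have e2 : Q ⁅Q X, Q Y⁆ = ∑ i, ((Submodule.orthogonalProjectionOnto ((h ⊓ G i)ᗮ ⊓ k ⊓ G i) (β i)
      : ((h ⊓ G i)ᗮ ⊓ k ⊓ G i : Submodule ℝ g)) : g) := by
    rw [e1]
    have hmap : Q (∑ i, β i) = ∑ i, Q (β i) := by
      simp only [hQdef, map_sum, Submodule.coe_sum]
    rw [hmap]
    exact Finset.sum_congr rfl (fun i _ => projmG i (β i) (hβG i))
  have e3 : ‖Q ⁅Q X, Q Y⁆‖ ^ 2 = ∑ i, ‖((Submodule.orthogonalProjectionOnto ((h ⊓ G i)ᗮ ⊓ k ⊓ G i) (β i)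
      : ((h ⊓ G i)ᗮ ⊓ k ⊓ G i : Submodule ℝ g)) : g)‖ ^ 2 := by
    rw [e2]
    exact normsum _ (fun i => MleG i (SetLike.coe_mem _))
  have e4 : ‖⁅X, Y⁆‖ ^ 2 = ∑ i, ‖⁅((Submodule.orthogonalProjectionOnto (G i) X : G i) : g),
      ((Submodule.orthogonalProjectionOnto (G i) Y : G i) : g)⁆‖ ^ 2 := by
    rw [brkt X Y]
    exact normsum _ (fun i => hGideal i _ _ (SetLike.coe_mem _))
  have e5 : ∀ i, ‖((Submodule.orthogonalProjectionOnto ((h ⊓ G i)ᗮ ⊓ k ⊓ G i) (β i)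
      : ((h ⊓ G i)ᗮ ⊓ k ⊓ G i : Submodule ℝ g)) : g)‖
      ≤ C i * ‖⁅((Submodule.orthogonalProjectionOnto (G i) X : G i) : g),
          ((Submodule.orthogonalProjectionOnto (G i) Y : G i) : g)⁆‖ := by
    intro i
    exact hCi i _ ⟨PmemPerp X hX i, SetLike.coe_mem _⟩ _ ⟨PmemPerp Y hY i, SetLike.coe_mem _⟩
  set C0 : ℝ := Finset.univ.sup' (Finset.univ_nonempty_iff.mpr ⟨⟨0, hn⟩⟩) C with hC0def
  have hC0i : ∀ i, C i ≤ C0 := fun i => Finset.le_sup' C (Finset.mem_univ i)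
  have hC0pos : (0 : ℝ) < C0 := lt_of_lt_of_le (hC ⟨0, hn⟩) (hC0i ⟨0, hn⟩)
  have hsq : ‖Q ⁅Q X, Q Y⁆‖ ^ 2 ≤ (C0 * ‖⁅X, Y⁆‖) ^ 2 := by
    rw [e3, mul_pow, e4, Finset.mul_sum]
    apply Finset.sum_le_sum
    intro i _
    have h5 : ‖((Submodule.orthogonalProjectionOnto ((h ⊓ G i)ᗮ ⊓ k ⊓ G i) (β i)
        : ((h ⊓ G i)ᗮ ⊓ k ⊓ G i : Submodule ℝ g)) : g)‖ ^ 2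
        ≤ (C i * ‖⁅((Submodule.orthogonalProjectionOnto (G i) X : G i) : g),
            ((Submodule.orthogonalProjectionOnto (G i) Y : G i) : g)⁆‖) ^ 2 :=
      pow_le_pow_left₀ (norm_nonneg _) (e5 i) 2
    refine h5.trans ?_
    rw [mul_pow]
    exact mul_le_mul_of_nonneg_right (pow_le_pow_left₀ (hC i).le (hC0i i) 2) (sq_nonneg _)
  have hfin := abs_le_of_sq_le_sq' hsq (mul_nonneg hC0pos.le (norm_nonneg _))
  calc ‖Q ⁅Q X, Q Y⁆‖ = |‖Q ⁅Q X, Q Y⁆‖| := (abs_of_nonneg (norm_nonneg _)).symm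
    _ ≤ C0 * ‖⁅X, Y⁆‖ := by rw [abs_of_nonneg (norm_nonneg _)]; exact hfin.2
end
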